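/- arXiv:2011.08220 — 2 statements merged into one kernel-verified Lean document; each statement's English description precedes it below -/
import Mathlib

section
/- Let n ≥ 0 and r ≥ 2 be integers. Then |D_{1,r}(n)| = |F_{1,r}(n)|, i.e., the number of partitions of n in which exactly one part size appears at least r times equals the number of partitions of n in which exactly one difference of consecutive parts (including the last part, taking the part after the last to be 0) is at least r and all other such differences are at most r−1. -/
open scoped Classical

namespace BeckPaper

/-- The parts of a partition, sorted in non-increasing order. -/
def partsList {n : ℕ} (p : n.Partition) : List ℕ := p.parts.sort (· ≥ ·)

/-- The `i`-th part of a partition (`1`-indexed); `0` if `i` exceeds the number of parts. -/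
def part {n : ℕ} (p : n.Partition) (i : ℕ) : ℕ := (partsList p).getD (i - 1) 0

/-- `ℓ(λ)`: the number of parts of `λ`. -/
def numParts {n : ℕ} (p : n.Partition) : ℕ := Multiset.card p.parts

/-- `ℓ_t(λ)`: the number of parts of `λ` congruent to `t` modulo `r`. -/
def lMod (r t : ℕ) {n : ℕ} (p : n.Partition) : ℕ :=
  Multiset.card (p.parts.filter (fun x => x % r = t % r))

/-- `ℓ̄_t(λ)`: the number of different part sizes appearing at least `t` times in `λ`. -/
def lRep (t : ℕ) {n : ℕ} (p : n.Partition) : ℕ :=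
  (p.parts.toFinset.filter (fun s => t ≤ p.parts.count s)).card

/-- `ℓ̄(λ)`: the number of different part sizes of `λ`. -/
def lDist {n : ℕ} (p : n.Partition) : ℕ := p.parts.toFinset.card

/-- `d_t(λ)`: the number of indices `1 ≤ i ≤ ℓ(λ)` with `λ_i − λ_{i+1} ≥ t`. -/
def dCount (t : ℕ) {n : ℕ} (p : n.Partition) : ℕ :=
  ((Finset.Icc 1 (numParts p)).filter (fun i => t ≤ part p i - part p (i + 1))).card

/-- `λ ∈ O_r(n)`: no part is divisible by `r`. -/
def IsRegular (r : ℕ) {n : ℕ} (p : n.Partition) : Prop := ∀ x ∈ p.parts, ¬ r ∣ x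

/-- `λ ∈ D_r(n)`: no part appears more than `r − 1` times. -/
def IsRestricted (r : ℕ) {n : ℕ} (p : n.Partition) : Prop :=
  ∀ s : ℕ, p.parts.count s ≤ r - 1

/-- `λ ∈ F_r(n)`: all differences of consecutive parts (with `λ_{k+1} = 0`) are `≤ r − 1`. -/
def IsFlat (r : ℕ) {n : ℕ} (p : n.Partition) : Prop :=
  ∀ i, 1 ≤ i → i ≤ numParts p → part p i - part p (i + 1) ≤ r - 1

/-- `λ ∈ O_{1,r}(n)`: the set of part sizes divisible by `r` has exactly one element. -/
def IsOneRegular (r : ℕ) {n : ℕ} (p : n.Partition) : Prop :=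
  (p.parts.toFinset.filter (fun s => r ∣ s)).card = 1

/-- `λ ∈ D_{1,r}(n)`: exactly one part size appears at least `r` times. -/
def IsOneRestricted (r : ℕ) {n : ℕ} (p : n.Partition) : Prop :=
  (p.parts.toFinset.filter (fun s => r ≤ p.parts.count s)).card = 1

/-- `λ ∈ F_{1,r}(n)`: exactly one difference of consecutive parts is `≥ r`, and all
other such differences are `≤ r − 1`. -/
def IsOneFlat (r : ℕ) {n : ℕ} (p : n.Partition) : Prop :=
  ∃ i, (1 ≤ i ∧ i ≤ numParts p ∧ r ≤ part p i - part p (i + 1)) ∧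
    ∀ j, 1 ≤ j → j ≤ numParts p → j ≠ i → part p j - part p (j + 1) ≤ r - 1

/-- `λ ∈ T_r(n)`: exactly one part size has multiplicity at least `r`, and that
multiplicity is strictly less than `2r`. -/
def IsInT (r : ℕ) {n : ℕ} (p : n.Partition) : Prop :=
  ∃ s : ℕ, (r ≤ p.parts.count s ∧ p.parts.count s < 2 * r) ∧
    ∀ s' : ℕ, r ≤ p.parts.count s' → s' = s

variable {n : ℕ}

def g (p : n.Partition) (j : ℕ) : ℕ := Multiset.card (p.parts.filter (fun x => j ≤ x))

lemma parts_le (p : n.Partition) {x : ℕ} (hx : x ∈ p.parts) : x ≤ n := by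
  calc x ≤ p.parts.sum := Multiset.single_le_sum (fun _ _ => Nat.zero_le _) x hx
  _ = n := p.parts_sum

lemma length_partsList (p : n.Partition) : (partsList p).length = numParts p :=
  Multiset.length_sort _

lemma coe_partsList (p : n.Partition) : (↑(partsList p) : Multiset ℕ) = p.parts :=
  Multiset.sort_eq _ _

lemma numParts_le (p : n.Partition) : numParts p ≤ n := by
  have : numParts p • 1 ≤ p.parts.sum :=
    Multiset.card_nsmul_le_sum (fun x hx => p.parts_pos hx)
  simpa [p.parts_sum] using this

lemma key_iff (p : n.Partition) {i j : ℕ} (hi : 1 ≤ i) (hj : 1 ≤ j) :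
    i ≤ g p j ↔ j ≤ part p i := by
  classical
  set L := partsList p with hL
  have hsort : L.Pairwise (· ≥ ·) := Multiset.pairwise_sort _ _
  have hg : g p j = (L.filter (fun x => j ≤ x)).length := by
    rw [g, ← coe_partsList p]
    simp [hL]
  constructor
  · intro h
    by_contra hcon
    push_neg at hcon
    rcases Nat.lt_or_ge (i-1) L.length with hlen | hlen
    · have hpart : part p i = L[i-1] := by
        rw [part, ← hL, List.getD_eq_getElem _ _ hlen]
      have hfil : L.filter (fun x => j ≤ x) =
          (L.take (i-1)).filter (fun x => j ≤ x) := by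
        conv_lhs => rw [← List.take_append_drop (i-1) L, List.filter_append]
        have hnil : (L.drop (i-1)).filter (fun x => j ≤ x) = [] := by
          rw [List.filter_eq_nil_iff]
          intro a ha
          simp only [decide_eq_true_eq, not_le]
          have hdrop : L.drop (i-1) = L[i-1] :: L.drop i := by
            have hii : i - 1 + 1 = i := by omega
            rw [List.drop_eq_getElem_cons hlen, hii]
          rw [hdrop, List.mem_cons] at ha
          rcases ha with rfl | ha
          · exact hpart ▸ hcon
          · have hpw : List.Pairwise (· ≥ ·) (L[i-1] :: L.drop i) := by
              rw [← hdrop]; exact List.Pairwise.drop hsort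
            have : L[i-1] ≥ a := List.rel_of_pairwise_cons hpw ha
            omega
        rw [hnil, List.append_nil]
      have : (L.filter (fun x => j ≤ x)).length ≤ i - 1 := by
        rw [hfil]
        calc ((L.take (i-1)).filter _).length ≤ (L.take (i-1)).length :=
              List.length_filter_le _ _
          _ ≤ i - 1 := by simp
      omega
    · -- i - 1 ≥ length; but filter length ≥ i > length, contradiction
      have : (L.filter (fun x => j ≤ x)).length ≤ L.length :=
        List.length_filter_le _ _
      omega
  · intro h
    have hpos : 0 < part p i := lt_of_lt_of_le hj h
    have hlen : i - 1 < L.length := by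
      by_contra hc
      push_neg at hc
      rw [part, ← hL, List.getD_eq_default _ _ hc] at hpos
      omega
    have hpart : part p i = L[i-1] := by
      rw [part, ← hL, List.getD_eq_getElem _ _ hlen]
    have htake : (L.take i).filter (fun x => j ≤ x) = L.take i := by
      rw [List.filter_eq_self]
      intro a ha
      simp only [decide_eq_true_eq]
      obtain ⟨k, hk, rfl⟩ := List.getElem_of_mem ha
      have hk' : k < L.length := by simp at hk; omega
      have hki : k ≤ i - 1 := by simp at hk; omega
      have hget : (L.take i)[k] = L[k] := List.getElem_take ..
      have : L[k] ≥ L[i-1] :=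
        List.Pairwise.rel_get_of_le hsort (a := ⟨k, hk'⟩) (b := ⟨i-1, hlen⟩) hki
      rw [hget]
      omega
    have hsub : (L.take i).length ≤ (L.filter (fun x => j ≤ x)).length := by
      rw [← htake]
      exact ((List.take_sublist i L).filter _).length_le
    rw [hg]
    have : (L.take i).length = min i L.length := by simp
    omega

lemma part_le_n (p : n.Partition) (i : ℕ) : part p i ≤ n := by
  rcases Nat.lt_or_ge (i-1) (partsList p).length with h | h
  · have : (partsList p).getD (i-1) 0 ∈ partsList p := by
      rw [List.getD_eq_getElem _ _ h]
      exact List.getElem_mem _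
    exact parts_le p (by rwa [← Multiset.mem_coe, coe_partsList] at this)
  · rw [part, List.getD_eq_default _ _ h]
    exact Nat.zero_le _

lemma sum_g_aux (s : Multiset ℕ) (hb : ∀ x ∈ s, x ≤ n) :
    ∑ k ∈ Finset.range n, Multiset.card (s.filter (fun x => k + 1 ≤ x)) = s.sum := by
  classical
  induction s using Multiset.induction_on with
  | empty => simp
  | cons a t ih =>
    have ha : a ≤ n := hb a (Multiset.mem_cons_self _ _)
    have ht : ∀ x ∈ t, x ≤ n := fun x hx => hb x (Multiset.mem_cons_of_mem hx)
    have hstep : ∀ k, Multiset.card ((a ::ₘ t).filter (fun x => k + 1 ≤ x)) =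
        Multiset.card (t.filter (fun x => k + 1 ≤ x)) + (if k + 1 ≤ a then 1 else 0) := by
      intro k
      rw [Multiset.filter_cons]
      split <;> simp
    simp only [hstep, Finset.sum_add_distrib, ih ht, Multiset.sum_cons]
    have : ∑ k ∈ Finset.range n, (if k + 1 ≤ a then 1 else 0) = a := by
      rw [Finset.sum_boole]
      have hf : (Finset.range n).filter (fun k => k + 1 ≤ a) = Finset.range a := by
        ext k
        simp only [Finset.mem_filter, Finset.mem_range]
        omega
      rw [hf]; simp
    omega

/-- The conjugate partition. -/
def conj (p : n.Partition) : n.Partition where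
  parts := (((Finset.range n).val.map (fun k => g p (k + 1))).filter (fun x => 0 < x))
  parts_pos := fun h => (Multiset.mem_filter.mp h).2
  parts_sum := by
    classical
    have h2 : (((Finset.range n).val.map (fun k => g p (k + 1))).filter (fun x => 0 < x)).sum
        = ((Finset.range n).val.map (fun k => g p (k + 1))).sum := by
      conv_rhs => rw [← Multiset.filter_add_not (fun x => 0 < x)
        ((Finset.range n).val.map (fun k => g p (k + 1))), Multiset.sum_add]
      have : (((Finset.range n).val.map (fun k => g p (k + 1))).filter
          (fun x => ¬ 0 < x)).sum = 0 := by
        apply Multiset.sum_eq_zero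
        intro x hx
        have := (Multiset.mem_filter.mp hx).2
        omega
      omega
    rw [h2]
    have h3 : ((Finset.range n).val.map (fun k => g p (k + 1))).sum
        = ∑ k ∈ Finset.range n, g p (k + 1) := rfl
    rw [h3]
    have := sum_g_aux (n := n) p.parts (fun x hx => parts_le p hx)
    simpa [g, p.parts_sum] using this

lemma conj_parts (p : n.Partition) : (conj p).parts
    = ((Finset.range n).val.map (fun k => g p (k + 1))).filter (fun x => 0 < x) := rfl

lemma g_conj (p : n.Partition) {j : ℕ} (hj : 1 ≤ j) : g (conj p) j = part p j := by
  classical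
  have h1 : (conj p).parts.filter (fun x => j ≤ x)
      = ((Finset.range n).val.map (fun k => g p (k + 1))).filter (fun x => j ≤ x) := by
    rw [conj_parts, Multiset.filter_filter]
    apply Multiset.filter_congr
    intro x _
    constructor
    · exact fun h => h.1
    · exact fun h => ⟨h, by omega⟩
  rw [g, h1]
  have h2 : Multiset.card (((Finset.range n).val.map (fun k => g p (k + 1))).filter
      (fun x => j ≤ x)) = ((Finset.range n).filter (fun k => j ≤ g p (k + 1))).card := by
    rw [← Multiset.countP_eq_card_filter, Multiset.countP_map]
    rfl
  rw [h2]
  have h3 : (Finset.range n).filter (fun k => j ≤ g p (k + 1))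
      = Finset.range (part p j) := by
    ext k
    simp only [Finset.mem_filter, Finset.mem_range]
    have hk : ∀ hk : k < n, (j ≤ g p (k+1) ↔ k + 1 ≤ part p j) := by
      intro _
      exact key_iff p hj (by omega)
    constructor
    · rintro ⟨hkn, hle⟩
      have := (hk hkn).mp hle
      omega
    · intro hlt
      have hkn : k < n := lt_of_lt_of_le hlt (part_le_n p j)
      exact ⟨hkn, (hk hkn).mpr (by omega)⟩
  rw [h3, Finset.card_range]

lemma conj_parts_eq_aux (L : List ℕ) (hlen : L.length ≤ n) (hpos : ∀ x ∈ L, 0 < x) :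
    ((List.range n).map (fun k => L.getD k 0)).filter (fun x => 0 < x) = L := by
  have hn : n = L.length + (n - L.length) := by omega
  rw [hn, List.range_add, List.map_append, List.filter_append]
  have h1 : (List.range L.length).map (fun k => L.getD k 0) = L := by
    apply List.ext_getElem
    · simp
    · intro k h1 h2
      simp only [List.getElem_map, List.getElem_range]
      exact List.getD_eq_getElem _ _ h2
  have h2 : ((List.map (fun x => L.length + x) (List.range (n - L.length))).map
      (fun k => L.getD k 0)).filter (fun x => 0 < x) = [] := by
    rw [List.filter_eq_nil_iff]
    intro a ha
    simp only [List.map_map, List.mem_map, Function.comp] at ha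
    obtain ⟨m, _, rfl⟩ := ha
    rw [List.getD_eq_default _ _ (by omega)]
    simp
  rw [h1, h2, List.append_nil, List.filter_eq_self]
  intro a ha
  simpa using hpos a ha

lemma conj_conj (p : n.Partition) : conj (conj p) = p := by
  classical
  have hparts : (conj (conj p)).parts = p.parts := by
    show (((Finset.range n).val.map (fun k => g (conj p) (k + 1))).filter (fun x => 0 < x))
      = p.parts
    have hmap : (Finset.range n).val.map (fun k => g (conj p) (k + 1))
        = (Finset.range n).val.map (fun k => part p (k + 1)) := by
      apply Multiset.map_congr rfl
      intro k _
      exact g_conj p (by omega)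
    rw [hmap]
    have hL : (Finset.range n).val.map (fun k => part p (k + 1))
        = ((List.range n).map (fun k => (partsList p).getD k 0) : List ℕ) := by
      have : (Finset.range n).val = (List.range n : List ℕ) := rfl
      rw [this]
      rw [← Multiset.map_coe]
      rfl
    rw [hL]
    have : Multiset.filter (fun x => 0 < x)
        ((List.range n).map (fun k => (partsList p).getD k 0) : List ℕ)
        = (((List.range n).map (fun k => (partsList p).getD k 0)).filter
            (fun x => 0 < x) : List ℕ) := by
      simp [Multiset.filter_coe]
    rw [this, conj_parts_eq_aux (partsList p)
      (by rw [length_partsList]; exact numParts_le p)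
      (by intro x hx
          exact p.parts_pos (by rwa [← Multiset.mem_coe, coe_partsList] at hx))]
    exact coe_partsList p
  exact Nat.Partition.ext hparts

lemma part_conj (p : n.Partition) {i : ℕ} (hi : 1 ≤ i) : part (conj p) i = g p i := by
  have h := g_conj (conj p) hi
  rw [conj_conj] at h
  exact h.symm

lemma g_succ (p : n.Partition) (i : ℕ) : g p i = g p (i + 1) + p.parts.count i := by
  classical
  have hd := Multiset.filter_add_filter (fun x => i + 1 ≤ x) (fun x => x = i) p.parts
  have h1 : p.parts.filter (fun x => i + 1 ≤ x ∧ x = i) = 0 := by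
    rw [Multiset.filter_eq_nil]
    intro a _ h
    omega
  have h2 : p.parts.filter (fun x => i + 1 ≤ x ∨ x = i) = p.parts.filter (fun x => i ≤ x) := by
    apply Multiset.filter_congr
    intro x _
    omega
  rw [h1, h2] at hd
  have hcount : p.parts.count i = Multiset.card (p.parts.filter (fun x => x = i)) := by
    rw [Multiset.count_eq_card_filter_eq]
    congr 1
    apply Multiset.filter_congr
    intro x _
    exact eq_comm
  have := congrArg Multiset.card hd
  rw [Multiset.card_add] at this
  simp only [Multiset.card_add, add_zero] at this
  rw [g, g, hcount]
  omega

lemma diff_conj (p : n.Partition) {i : ℕ} (hi : 1 ≤ i) :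
    part (conj p) i - part (conj p) (i + 1) = p.parts.count i := by
  rw [part_conj p hi, part_conj p (by omega : 1 ≤ i + 1)]
  have := g_succ p i
  omega

lemma numParts_conj (p : n.Partition) : numParts (conj p) = part p 1 := by
  have h1 : numParts (conj p) = g (conj p) 1 := by
    rw [numParts, g]
    congr 1
    rw [eq_comm, Multiset.filter_eq_self]
    intro a ha
    exact (conj p).parts_pos ha
  rw [h1, g_conj p le_rfl]

lemma le_part_one (p : n.Partition) {s : ℕ} (hs : s ∈ p.parts) : s ≤ part p 1 := by
  have hs1 : 1 ≤ s := p.parts_pos hs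
  have h1 : 1 ≤ g p s := by
    rw [g]
    have : s ∈ p.parts.filter (fun x => s ≤ x) := Multiset.mem_filter.mpr ⟨hs, le_rfl⟩
    have := Multiset.card_pos_iff_exists_mem.mpr ⟨s, this⟩
    omega
  exact (key_iff p le_rfl hs1).mp h1

lemma restricted_iff_flat_conj (p : n.Partition) {r : ℕ} (hr : 2 ≤ r) :
    IsOneRestricted r p ↔ IsOneFlat r (conj p) := by
  classical
  constructor
  · intro h
    obtain ⟨a, ha⟩ := Finset.card_eq_one.mp h
    have hmem : a ∈ p.parts.toFinset.filter (fun s => r ≤ p.parts.count s) := by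
      rw [ha]; exact Finset.mem_singleton_self a
    rw [Finset.mem_filter, Multiset.mem_toFinset] at hmem
    have ha1 : 1 ≤ a := p.parts_pos hmem.1
    refine ⟨a, ⟨ha1, ?_, ?_⟩, ?_⟩
    · rw [numParts_conj]
      exact le_part_one p hmem.1
    · rw [diff_conj p ha1]
      exact hmem.2
    · intro j hj1 hj2 hja
      rw [diff_conj p hj1]
      by_contra hc
      push_neg at hc
      have hjr : r ≤ p.parts.count j := by omega
      have hjmem : j ∈ p.parts := by
        rw [← Multiset.count_pos]
        omega
      have : j ∈ p.parts.toFinset.filter (fun s => r ≤ p.parts.count s) :=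
        Finset.mem_filter.mpr ⟨Multiset.mem_toFinset.mpr hjmem, hjr⟩
      rw [ha, Finset.mem_singleton] at this
      exact hja this
  · rintro ⟨i, ⟨hi1, hi2, hir⟩, huniq⟩
    rw [diff_conj p hi1] at hir
    rw [IsOneRestricted, Finset.card_eq_one]
    refine ⟨i, ?_⟩
    ext s
    rw [Finset.mem_filter, Multiset.mem_toFinset, Finset.mem_singleton]
    constructor
    · rintro ⟨hsmem, hsr⟩
      by_contra hsi
      have hs1 : 1 ≤ s := p.parts_pos hsmem
      have hs2 : s ≤ numParts (conj p) := by
        rw [numParts_conj]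
        exact le_part_one p hsmem
      have := huniq s hs1 hs2 hsi
      rw [diff_conj p hs1] at this
      omega
    · rintro rfl
      refine ⟨?_, hir⟩
      rw [← Multiset.count_pos]
      omega

theorem oneRestricted_eq_oneFlat (n r : ℕ) (hr : 2 ≤ r) :
    (Finset.univ.filter (fun p : n.Partition => IsOneRestricted r p)).card = (Finset.univ.filter (fun p : n.Partition => IsOneFlat r p)).card := by
  classical
  apply Finset.card_bij' (fun p _ => conj p) (fun q _ => conj q)
  · intro p hp
    rw [Finset.mem_filter] at hp ⊢
    exact ⟨Finset.mem_univ _, (restricted_iff_flat_conj p hr).mp hp.2⟩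
  · intro q hq
    rw [Finset.mem_filter] at hq ⊢
    refine ⟨Finset.mem_univ _, ?_⟩
    have := (restricted_iff_flat_conj (conj q) hr)
    rw [conj_conj] at this
    exact this.mpr hq.2
  · intro p _
    exact conj_conj p
  · intro q _
    exact conj_conj q


end BeckPaper
end

section
/- Let n ≥ 0 and r ≥ 2 be integers. Then |D_{1,r}(n)| = |O_{1,r}(n)|, i.e., the number of partitions of n in which exactly one part size appears at least r times equals the number of partitions of n with exactly one part size divisible by r. -/
open scoped Classical

namespace BeckPaper

variable (r : ℕ)

/-- The `j`-th base-`r` digit of `m`. -/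
def dgt (j m : ℕ) : ℕ := m / r ^ j % r

variable {r}

theorem dgt_lt (hr : 2 ≤ r) (j m : ℕ) : dgt r j m < r :=
  Nat.mod_lt _ (by omega)

theorem dgt_eq_zero {j m : ℕ} (h : m < r ^ j) : dgt r j m = 0 := by
  simp [dgt, Nat.div_eq_of_lt h]

theorem dgt_zero (m : ℕ) : dgt r 0 m = m % r := by simp [dgt]

theorem dgt_succ (j m : ℕ) : dgt r (j + 1) m = dgt r j (m / r) := by
  simp [dgt, Nat.div_div_eq_div_mul, pow_succ, mul_comm]

theorem self_lt_pow (hr : 2 ≤ r) (m : ℕ) : m < r ^ m :=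
  lt_of_lt_of_le (Nat.lt_two_pow_self (n := m)) (Nat.pow_le_pow_left hr m)

theorem sum_range_dgt (hr : 2 ≤ r) : ∀ (K m : ℕ), m < r ^ K →
    ∑ j ∈ Finset.range K, dgt r j m * r ^ j = m := by
  intro K
  induction K with
  | zero => intro m hm; simp at hm ⊢; omega
  | succ K ih =>
    intro m hm
    rw [Finset.sum_range_succ']
    simp only [dgt_succ, dgt_zero, pow_succ, pow_zero, mul_one]
    have h1 : ∀ j, dgt r (j) (m / r) * (r ^ j * r) = (dgt r j (m / r) * r ^ j) * r := by
      intro j; ring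
    simp only [h1, ← Finset.sum_mul]
    rw [ih (m / r) (by
      have : m < r ^ K * r := by rw [← pow_succ]; exact hm
      exact Nat.div_lt_of_lt_mul (by rwa [mul_comm] at this))]
    rw [mul_comm (m / r) r]
    exact Nat.div_add_mod m r

theorem sum_lt_pow (hr : 2 ≤ r) (f : ℕ → ℕ) (hf : ∀ i, f i < r) : ∀ K : ℕ,
    ∑ i ∈ Finset.range K, f i * r ^ i < r ^ K := by
  intro K
  induction K with
  | zero => simp
  | succ K ih =>
    rw [Finset.sum_range_succ, pow_succ]
    have := hf K
    have h2 : f K * r ^ K ≤ (r - 1) * r ^ K := by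
      apply Nat.mul_le_mul_right; omega
    have h3 : r ^ K ≥ 1 := Nat.one_le_pow _ _ (by omega)
    nlinarith

theorem sum_range_shift (f : ℕ → ℕ) (K : ℕ) :
    ∑ i ∈ Finset.range (K + 1), f i * r ^ i
      = r * (∑ i ∈ Finset.range K, f (i + 1) * r ^ i) + f 0 := by
  rw [Finset.sum_range_succ']
  simp only [pow_zero, mul_one, pow_succ]
  rw [Finset.mul_sum]
  congr 1
  apply Finset.sum_congr rfl
  intro i _
  ring

theorem dgt_sum (hr : 2 ≤ r) : ∀ (j K : ℕ) (f : ℕ → ℕ), (∀ i, f i < r) → j < K →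
    dgt r j (∑ i ∈ Finset.range K, f i * r ^ i) = f j := by
  intro j
  induction j with
  | zero =>
    intro K f hf hK
    obtain ⟨K', rfl⟩ : ∃ K', K = K' + 1 := ⟨K - 1, by omega⟩
    rw [sum_range_shift, dgt_zero, Nat.mul_add_mod, Nat.mod_eq_of_lt (hf 0)]
  | succ j ih =>
    intro K f hf hK
    obtain ⟨K', rfl⟩ : ∃ K', K = K' + 1 := ⟨K - 1, by omega⟩
    rw [sum_range_shift, dgt_succ]
    have hdiv : (r * (∑ i ∈ Finset.range K', f (i + 1) * r ^ i) + f 0) / r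
        = ∑ i ∈ Finset.range K', f (i + 1) * r ^ i := by
      rw [Nat.add_comm, Nat.add_mul_div_left _ _ (by omega : 0 < r),
        Nat.div_eq_of_lt (hf 0)]
      omega
    rw [hdiv]
    exact ih K' (fun i => f (i + 1)) (fun i => hf (i + 1)) (by omega)

/-! ### Unique decomposition `s = a * r ^ j` with `¬ r ∣ a` -/

theorem cc_mul_pow {s : ℕ} (hs : 0 < s) :
    s / r ^ Nat.maxPowDiv r s * r ^ Nat.maxPowDiv r s = s :=
  Nat.div_mul_cancel ((Nat.maxPowDiv.pow_dvd (p := r) (n := s)))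

theorem cc_pos (hr : 2 ≤ r) {s : ℕ} (hs : 0 < s) : 0 < s / r ^ Nat.maxPowDiv r s :=
  Nat.div_pos (Nat.le_of_dvd hs ((Nat.maxPowDiv.pow_dvd (p := r) (n := s))))
    (Nat.pow_pos (by omega))

theorem not_dvd_cc (hr : 2 ≤ r) {s : ℕ} (hs : 0 < s) :
    ¬ r ∣ s / r ^ Nat.maxPowDiv r s := by
  intro ⟨k, hk⟩
  have h1 : r ^ (Nat.maxPowDiv r s + 1) ∣ s := by
    refine ⟨k, ?_⟩
    calc s = s / r ^ Nat.maxPowDiv r s * r ^ Nat.maxPowDiv r s := (cc_mul_pow hs).symm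
    _ = r * k * r ^ Nat.maxPowDiv r s := by rw [hk]
    _ = r ^ (Nat.maxPowDiv r s + 1) * k := by ring
  have : Nat.maxPowDiv r s + 1 ≤ Nat.maxPowDiv r s := (Nat.pow_dvd_iff_le_padicValNat (by omega : r ≠ 1) (by omega : s ≠ 0)).mp h1
  omega

theorem maxPowDiv_eq_zero (hr : 2 ≤ r) {a : ℕ} (ha : ¬ r ∣ a) :
    Nat.maxPowDiv r a = 0 := by
  by_contra h
  exact ha (dvd_trans (dvd_pow_self r h) ((Nat.maxPowDiv.pow_dvd (p := r) (n := a))))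

theorem vv_mul_pow (hr : 2 ≤ r) {a : ℕ} (ha0 : 0 < a) (ha : ¬ r ∣ a) (j : ℕ) :
    Nat.maxPowDiv r (a * r ^ j) = j := by
  rw [mul_comm, show Nat.maxPowDiv r (r ^ j * a) = Nat.maxPowDiv r a + j from
      Nat.maxPowDiv.base_pow_mul (by omega : 1 < r) (by omega : a ≠ 0) j,
    maxPowDiv_eq_zero hr ha]
  omega

theorem cc_mul_pow_self (hr : 2 ≤ r) {a : ℕ} (ha0 : 0 < a) (ha : ¬ r ∣ a) (j : ℕ) :
    a * r ^ j / r ^ Nat.maxPowDiv r (a * r ^ j) = a := by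
  rw [vv_mul_pow hr ha0 ha, Nat.mul_div_cancel _ (Nat.pow_pos (by omega))]

theorem decomp_unique (hr : 2 ≤ r) {a b i j : ℕ} (ha0 : 0 < a) (ha : ¬ r ∣ a)
    (hb0 : 0 < b) (hb : ¬ r ∣ b) (h : a * r ^ i = b * r ^ j) : a = b ∧ i = j := by
  have hi : i = j := by
    have h1 := vv_mul_pow hr ha0 ha i
    have h2 := vv_mul_pow hr hb0 hb j
    rw [h] at h1; omega
  subst hi
  refine ⟨?_, rfl⟩
  exact Nat.eq_of_mul_eq_mul_right (Nat.pow_pos (by omega)) h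

/-! ### The Glaisher maps on multisets -/

open Multiset

variable (r) in
/-- Glaisher map: replace each part `s = a * r ^ j` (with `¬ r ∣ a`) by `r ^ j` copies of `a`. -/
def toO (M : Multiset ℕ) : Multiset ℕ :=
  M.bind (fun s => replicate (r ^ Nat.maxPowDiv r s) (s / r ^ Nat.maxPowDiv r s))

variable (r) in
/-- Inverse Glaisher map: replace `m` copies of part `a` by `dgt r j m` copies of `a * r ^ j`. -/
def toD (M : Multiset ℕ) : Multiset ℕ :=
  ∑ a ∈ M.toFinset, ∑ j ∈ Finset.range (M.count a),
    replicate (dgt r j (M.count a)) (a * r ^ j)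

theorem sum_toO (M : Multiset ℕ) (hM : ∀ s ∈ M, 0 < s) : (toO r M).sum = M.sum := by
  rw [toO, Multiset.sum_bind]
  have : M.map (fun s => (replicate (r ^ Nat.maxPowDiv r s)
      (s / r ^ Nat.maxPowDiv r s)).sum) = M.map id := by
    apply Multiset.map_congr rfl
    intro s hs
    rw [Multiset.sum_replicate, smul_eq_mul, id_eq, mul_comm, cc_mul_pow (hM s hs)]
  rw [this, Multiset.map_id]

theorem count_toO_eq_zero (hr : 2 ≤ r) {M : Multiset ℕ} (hM : ∀ s ∈ M, 0 < s)
    {b : ℕ} (hb : b = 0 ∨ r ∣ b) : count b (toO r M) = 0 := by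
  rw [toO, Multiset.count_bind]
  apply Multiset.sum_eq_zero
  intro x hx
  obtain ⟨s, hs, rfl⟩ := Multiset.mem_map.mp hx
  rw [count_replicate, if_neg, ]
  intro h
  rcases hb with rfl | hb
  · have := cc_pos hr (hM s hs); omega
  · exact not_dvd_cc hr (hM s hs) (h ▸ hb)

theorem mem_toO_pos (hr : 2 ≤ r) {M : Multiset ℕ} (hM : ∀ s ∈ M, 0 < s)
    {b : ℕ} (hb : b ∈ toO r M) : 0 < b ∧ ¬ r ∣ b := by
  constructor
  · rcases Nat.eq_zero_or_pos b with rfl | h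
    · exact absurd (Multiset.count_pos.mpr hb)
        (by rw [count_toO_eq_zero hr hM (Or.inl rfl)]; omega)
    · exact h
  · intro hdvd
    exact absurd (Multiset.count_pos.mpr hb)
      (by rw [count_toO_eq_zero hr hM (Or.inr hdvd)]; omega)

theorem count_toO_sum (hr : 2 ≤ r) {K : ℕ} {M : Multiset ℕ}
    (hM : ∀ s ∈ M, 0 < s ∧ s < r ^ K) {a : ℕ} (ha0 : 0 < a) (ha : ¬ r ∣ a) :
    count a (toO r M) = ∑ j ∈ Finset.range K, M.count (a * r ^ j) * r ^ j := by
  induction M using Multiset.induction_on with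
  | empty => simp [toO]
  | cons s M ih =>
    have hs0 : 0 < s := (hM s (Multiset.mem_cons_self s M)).1
    have hsK : s < r ^ K := (hM s (Multiset.mem_cons_self s M)).2
    have hM' : ∀ t ∈ M, 0 < t ∧ t < r ^ K := fun t ht => hM t (Multiset.mem_cons_of_mem ht)
    rw [toO, Multiset.cons_bind, Multiset.count_add, ← toO, ih hM']
    simp only [Multiset.count_cons]
    have expand : ∑ j ∈ Finset.range K, (M.count (a * r ^ j) + if a * r ^ j = s then 1 else 0) * r ^ j
        = (∑ j ∈ Finset.range K, M.count (a * r ^ j) * r ^ j)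
          + ∑ j ∈ Finset.range K, (if a * r ^ j = s then 1 else 0) * r ^ j := by
      rw [← Finset.sum_add_distrib]
      apply Finset.sum_congr rfl; intro j _; ring
    rw [expand]
    have key : count a (replicate (r ^ Nat.maxPowDiv r s) (s / r ^ Nat.maxPowDiv r s))
        = ∑ j ∈ Finset.range K, (if a * r ^ j = s then 1 else 0) * r ^ j := by
      rw [count_replicate]
      by_cases hcc : s / r ^ Nat.maxPowDiv r s = a
      · rw [if_pos hcc]
        have hvK : Nat.maxPowDiv r s < K := by
          have h1 : r ^ Nat.maxPowDiv r s ≤ s := Nat.le_of_dvd hs0 ((Nat.maxPowDiv.pow_dvd (p := r) (n := s)))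
          have := Nat.pow_lt_pow_iff_right (by omega : 1 < r) (n := Nat.maxPowDiv r s) (m := K)
          omega
        rw [Finset.sum_eq_single (Nat.maxPowDiv r s)]
        · rw [if_pos (by rw [← hcc]; exact cc_mul_pow hs0), one_mul]
        · intro j _ hj
          rw [if_neg, zero_mul]
          intro h
          have := decomp_unique hr ha0 ha ha0 ha
            (h.trans ((hcc ▸ cc_mul_pow hs0).symm))
          exact hj this.2
        · intro h
          exact absurd (Finset.mem_range.mpr hvK) h
      · rw [if_neg hcc]
        symm
        apply Finset.sum_eq_zero
        intro j _
        rw [if_neg, zero_mul]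
        intro h
        exact hcc (by rw [← h, cc_mul_pow_self hr ha0 ha])
    omega

theorem count_toD (hr : 2 ≤ r) {M : Multiset ℕ} (hM : ∀ s ∈ M, 0 < s ∧ ¬ r ∣ s)
    {a : ℕ} (ha0 : 0 < a) (ha : ¬ r ∣ a) (j : ℕ) :
    count (a * r ^ j) (toD r M) = dgt r j (M.count a) := by
  rw [toD, Multiset.count_sum']
  simp only [Multiset.count_sum', count_replicate]
  by_cases haM : a ∈ M.toFinset
  · rw [Finset.sum_eq_single a]
    · by_cases hj : j < M.count a
      · rw [Finset.sum_eq_single j]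
        · rw [if_pos rfl]
        · intro j' _ hj'
          rw [if_neg]
          intro h
          exact hj' (decomp_unique hr ha0 ha ha0 ha h).2
        · intro h; exact absurd (Finset.mem_range.mpr hj) h
      · rw [Finset.sum_eq_zero, dgt_eq_zero]
        · calc M.count a ≤ j := by omega
          _ < r ^ j := self_lt_pow hr j
        · intro j' hj'
          rw [if_neg]
          intro h
          have := (decomp_unique hr ha0 ha ha0 ha h).2
          rw [Finset.mem_range] at hj'
          omega
    · intro b hb hba
      apply Finset.sum_eq_zero
      intro j' _
      rw [if_neg]
      intro h
      have hb' := hM b (Multiset.mem_toFinset.mp hb)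
      exact hba (decomp_unique hr hb'.1 hb'.2 ha0 ha h).1
    · intro h; exact absurd haM h
  · have hc : Multiset.count a M = 0 :=
      Multiset.count_eq_zero_of_notMem (fun h => haM (Multiset.mem_toFinset.mpr h))
    rw [hc, Finset.sum_eq_zero]
    · simp [dgt]
    · intro b hb
      apply Finset.sum_eq_zero
      intro j' _
      rw [if_neg]
      intro h
      have hb' := hM b (Multiset.mem_toFinset.mp hb)
      have := (decomp_unique hr hb'.1 hb'.2 ha0 ha h).1
      exact haM (this ▸ hb)

theorem mem_toD (hr : 2 ≤ r) {M : Multiset ℕ} {s : ℕ} (hs : s ∈ toD r M) :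
    ∃ a ∈ M, ∃ j, j < M.count a ∧ s = a * r ^ j ∧ dgt r j (M.count a) ≠ 0 := by
  rw [toD] at hs
  obtain ⟨a, ha, hs⟩ := Multiset.mem_sum.mp hs
  obtain ⟨j, hj, hs⟩ := Multiset.mem_sum.mp hs
  rw [Multiset.eq_of_mem_replicate hs]
  refine ⟨a, Multiset.mem_toFinset.mp ha, j, Finset.mem_range.mp hj, rfl, ?_⟩
  intro h
  rw [h] at hs
  simp at hs

theorem sum_toD (hr : 2 ≤ r) (M : Multiset ℕ) (hM : ∀ s ∈ M, 0 < s) :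
    (toD r M).sum = M.sum := by
  rw [toD, Multiset.sum_sum]
  have step : ∀ a ∈ M.toFinset,
      (∑ j ∈ Finset.range (M.count a), replicate (dgt r j (M.count a)) (a * r ^ j)).sum
        = M.count a * a := by
    intro a _
    rw [Multiset.sum_sum]
    have : ∀ j ∈ Finset.range (M.count a),
        (replicate (dgt r j (M.count a)) (a * r ^ j)).sum
          = a * (dgt r j (M.count a) * r ^ j) := by
      intro j _
      rw [Multiset.sum_replicate, smul_eq_mul]; ring
    rw [Finset.sum_congr rfl this, ← Finset.mul_sum,
      sum_range_dgt hr _ _ (self_lt_pow hr (M.count a))]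
    ring
  rw [Finset.sum_congr rfl step]
  have := Multiset.toFinset_sum_count_nsmul_eq M
  calc ∑ a ∈ M.toFinset, M.count a * a
      = ∑ a ∈ M.toFinset, (M.count a • ({a} : Multiset ℕ)).sum := by
        apply Finset.sum_congr rfl; intro a _
        rw [← Multiset.replicate_one a, Multiset.nsmul_replicate, mul_one,
          Multiset.sum_replicate, smul_eq_mul]
    _ = (∑ a ∈ M.toFinset, M.count a • ({a} : Multiset ℕ)).sum := (Multiset.sum_sum _ _).symm
    _ = M.sum := by rw [this]

theorem card_le_sum' {M : Multiset ℕ} (h : ∀ x ∈ M, 0 < x) : Multiset.card M ≤ M.sum := by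
  induction M using Multiset.induction_on with
  | empty => simp
  | cons s M ih =>
    simp only [Multiset.card_cons, Multiset.sum_cons]
    have h1 := h s (Multiset.mem_cons_self s M)
    have h2 := ih (fun x hx => h x (Multiset.mem_cons_of_mem hx))
    omega

theorem toD_toO (hr : 2 ≤ r) {M : Multiset ℕ} (hM : ∀ s ∈ M, 0 < s)
    (hcnt : ∀ s, M.count s < r) : toD r (toO r M) = M := by
  have hN : ∀ s ∈ toO r M, 0 < s ∧ ¬ r ∣ s := fun s hs => mem_toO_pos hr hM hs
  ext b
  rcases Nat.eq_zero_or_pos b with rfl | hb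
  · rw [Multiset.count_eq_zero_of_notMem, Multiset.count_eq_zero_of_notMem]
    · intro h; exact absurd (hM 0 h) (by omega)
    · intro h
      obtain ⟨a, ha, j, _, habs, _⟩ := mem_toD hr h
      have := (hN a ha).1
      have : 0 < a * r ^ j := Nat.mul_pos this (Nat.pow_pos (by omega))
      omega
  · set K := M.sum with hK
    have hbound : ∀ s ∈ M, 0 < s ∧ s < r ^ K := by
      intro s hs
      exact ⟨hM s hs, lt_of_le_of_lt (Multiset.le_sum_of_mem hs) (self_lt_pow hr K)⟩
    have ha0 : 0 < b / r ^ Nat.maxPowDiv r b := cc_pos hr hb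
    have ha : ¬ r ∣ b / r ^ Nat.maxPowDiv r b := not_dvd_cc hr hb
    conv_lhs => rw [← cc_mul_pow (r := r) hb]
    conv_rhs => rw [← cc_mul_pow (r := r) hb]
    rw [count_toD hr hN ha0 ha, count_toO_sum hr hbound ha0 ha]
    set a := b / r ^ Nat.maxPowDiv r b
    set j := Nat.maxPowDiv r b
    by_cases hj : j < K
    · exact dgt_sum hr j K _ (fun i => hcnt _) hj
    · rw [dgt_eq_zero (lt_of_lt_of_le (sum_lt_pow hr _ (fun i => hcnt _) K)
        (Nat.pow_le_pow_right (by omega) (by omega)))]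
      symm
      rw [Multiset.count_eq_zero_of_notMem]
      intro hmem
      have h1 : a * r ^ j < r ^ K := (hbound _ hmem).2
      have h2 : r ^ K ≤ r ^ j := Nat.pow_le_pow_right (by omega) (by omega)
      have h3 : r ^ j ≤ a * r ^ j := Nat.le_mul_of_pos_left _ ha0
      omega

theorem toO_toD (hr : 2 ≤ r) {M : Multiset ℕ} (hM : ∀ s ∈ M, 0 < s ∧ ¬ r ∣ s) :
    toO r (toD r M) = M := by
  have hM0 : ∀ s ∈ M, 0 < s := fun s hs => (hM s hs).1
  have hN : ∀ s ∈ toD r M, 0 < s := by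
    intro s hs
    obtain ⟨a, ha, j, _, rfl, _⟩ := mem_toD hr hs
    exact Nat.mul_pos (hM0 a ha) (Nat.pow_pos (by omega))
  set S := M.sum with hS
  have hboundN : ∀ s ∈ toD r M, 0 < s ∧ s < r ^ (2 * S) := by
    intro s hs
    refine ⟨hN s hs, ?_⟩
    obtain ⟨a, ha, j, hjc, rfl, _⟩ := mem_toD hr hs
    have haS : a ≤ S := Multiset.le_sum_of_mem ha
    have hjS : j ≤ S := by
      have := Multiset.count_le_card a M
      have := card_le_sum' hM0
      omega
    calc a * r ^ j < r ^ S * r ^ S := by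
          apply Nat.mul_lt_mul_of_lt_of_le
          · exact lt_of_le_of_lt haS (self_lt_pow hr S)
          · exact Nat.pow_le_pow_right (by omega) hjS
          · exact Nat.pow_pos (by omega)
      _ = r ^ (2 * S) := by rw [← pow_add]; ring_nf
  ext b
  rcases Nat.eq_zero_or_pos b with rfl | hb
  · rw [count_toO_eq_zero hr hN (Or.inl rfl), Multiset.count_eq_zero_of_notMem]
    intro h; exact absurd (hM0 0 h) (by omega)
  by_cases hbr : r ∣ b
  · rw [count_toO_eq_zero hr hN (Or.inr hbr), Multiset.count_eq_zero_of_notMem]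
    intro h; exact absurd hbr (hM b h).2
  · rw [count_toO_sum hr hboundN hb hbr]
    have hterm : ∀ j ∈ Finset.range (2 * S),
        (toD r M).count (b * r ^ j) * r ^ j = dgt r j (M.count b) * r ^ j := by
      intro j _
      rw [count_toD hr hM hb hbr]
    rw [Finset.sum_congr rfl hterm]
    apply sum_range_dgt hr
    have h1 : M.count b ≤ S := le_trans (Multiset.count_le_card b M) (card_le_sum' hM0)
    have h2 : S < r ^ S := self_lt_pow hr S
    have h3 : r ^ S ≤ r ^ (2 * S) := Nat.pow_le_pow_right (by omega) (by omega)
    omega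

/-! ### Partition-level Glaisher bijection -/

def GO (r : ℕ) (hr : 2 ≤ r) {k : ℕ} (p : k.Partition) : k.Partition where
  parts := toO r p.parts
  parts_pos := by
    intro i hi
    exact (mem_toO_pos hr (fun s hs => p.parts_pos hs) hi).1
  parts_sum := by rw [sum_toO _ (fun s hs => p.parts_pos hs), p.parts_sum]

def GD (r : ℕ) (hr : 2 ≤ r) {k : ℕ} (p : k.Partition) : k.Partition where
  parts := toD r p.parts
  parts_pos := by
    intro i hi
    obtain ⟨a, ha, j, _, rfl, _⟩ := mem_toD hr hi
    exact Nat.mul_pos (p.parts_pos ha) (Nat.pow_pos (by omega))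
  parts_sum := by rw [sum_toD hr _ (fun s hs => p.parts_pos hs), p.parts_sum]

theorem glaisher (r : ℕ) (hr : 2 ≤ r) (k : ℕ) :
    (Finset.univ.filter (fun p : k.Partition => IsRestricted r p)).card
      = (Finset.univ.filter (fun p : k.Partition => IsRegular r p)).card := by
  apply Finset.card_nbij' (GO r hr) (GD r hr)
  · intro p hp
    simp only [Finset.mem_coe, Finset.mem_filter, Finset.mem_univ, true_and] at hp ⊢
    intro x hx
    exact (mem_toO_pos hr (fun s hs => p.parts_pos hs) hx).2
  · intro p hp
    simp only [Finset.mem_coe, Finset.mem_filter, Finset.mem_univ, true_and] at hp ⊢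
    intro s
    have hM : ∀ x ∈ p.parts, 0 < x ∧ ¬ r ∣ x := fun x hx => ⟨p.parts_pos hx, hp x hx⟩
    show Multiset.count s (toD r p.parts) ≤ r - 1
    rcases Nat.eq_zero_or_pos s with rfl | hs
    · rw [Multiset.count_eq_zero_of_notMem]
      · omega
      · intro h
        obtain ⟨a, ha, j, _, habs, _⟩ := mem_toD hr h
        have := Nat.mul_pos (p.parts_pos ha) (Nat.pow_pos (n := j) (by omega : 0 < r))
        omega
    · conv_lhs => rw [← cc_mul_pow (r := r) hs]
      rw [count_toD hr hM (cc_pos hr hs) (not_dvd_cc hr hs)]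
      have := dgt_lt hr (Nat.maxPowDiv r s) (p.parts.count (s / r ^ Nat.maxPowDiv r s))
      omega
  · intro p hp
    simp only [Finset.mem_coe, Finset.mem_filter, Finset.mem_univ, true_and] at hp
    apply Nat.Partition.ext
    show toD r (toO r p.parts) = p.parts
    apply toD_toO hr (fun s hs => p.parts_pos hs)
    intro s
    have := hp s
    omega
  · intro p hp
    simp only [Finset.mem_coe, Finset.mem_filter, Finset.mem_univ, true_and] at hp
    apply Nat.Partition.ext
    show toO r (toD r p.parts) = p.parts
    exact toO_toD hr (fun s hs => ⟨p.parts_pos hs, hp s hs⟩)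


/-! ### Decomposition of `D_{1,r}` and `O_{1,r}` -/

/-- A junk partition of `n`. -/
def junkP (n : ℕ) : n.Partition where
  parts := Multiset.replicate n 1
  parts_pos := fun hi => by rw [Multiset.eq_of_mem_replicate hi]; omega
  parts_sum := by simp

theorem sub_sum {A B : Multiset ℕ} (h : B ≤ A) : (A - B).sum = A.sum - B.sum := by
  have h1 : (A - B) + B = A := tsub_add_cancel_of_le h
  have h2 : ((A - B) + B).sum = (A - B).sum + B.sum := Multiset.sum_add _ _
  rw [h1] at h2
  omega

theorem sum_le_sum_of_le {A B : Multiset ℕ} (h : B ≤ A) : B.sum ≤ A.sum := by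
  have h1 : (A - B) + B = A := tsub_add_cancel_of_le h
  have h2 : ((A - B) + B).sum = (A - B).sum + B.sum := Multiset.sum_add _ _
  rw [h1] at h2
  omega

/-- The index set of the decomposition. -/
def Pairs (n r : ℕ) : Finset (ℕ × ℕ) :=
  ((Finset.Icc 1 n) ×ˢ (Finset.Icc 1 n)).filter (fun uq => r * uq.1 * uq.2 ≤ n)

theorem sigma_ext {n r : ℕ} (x y : Σ uq : ℕ × ℕ, (n - r * uq.1 * uq.2).Partition)
    (h1 : x.1 = y.1) (h2 : x.2.parts = y.2.parts) : x = y := by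
  obtain ⟨x1, x2⟩ := x
  obtain ⟨y1, y2⟩ := y
  dsimp at h1
  subst h1
  dsimp at h2
  rw [Nat.Partition.ext h2]

/-- The unique part size of `p` repeated at least `r` times. -/
def theU (r : ℕ) {n : ℕ} (p : n.Partition) : ℕ :=
  (p.parts.toFinset.filter (fun s => r ≤ p.parts.count s)).sum id

/-- The multiplicity of `theU`, divided by `r`. -/
def theQ (r : ℕ) {n : ℕ} (p : n.Partition) : ℕ := p.parts.count (theU r p) / r

theorem rep_le_parts (r : ℕ) {n : ℕ} (p : n.Partition) :
    Multiset.replicate (theQ r p * r) (theU r p) ≤ p.parts := by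
  rw [Multiset.le_iff_count]
  intro a
  rw [Multiset.count_replicate]
  split
  · next h => rw [← h]; exact Nat.div_mul_le_self _ _
  · omega

/-- Forward map on the restricted side. -/
def fwdD (r : ℕ) {n : ℕ} (p : n.Partition) :
    Σ uq : ℕ × ℕ, (n - r * uq.1 * uq.2).Partition :=
  ⟨(theU r p, theQ r p),
   { parts := p.parts - Multiset.replicate (theQ r p * r) (theU r p)
     parts_pos := fun hi => p.parts_pos (Multiset.mem_of_le tsub_le_self hi)
     parts_sum := by
       dsimp only
       rw [sub_sum (rep_le_parts r p), Multiset.sum_replicate, p.parts_sum, smul_eq_mul]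
       have e : theQ r p * r * theU r p = r * theU r p * theQ r p := by ring
       omega }⟩

/-- Backward map on the restricted side. -/
def bwdD (r : ℕ) {n : ℕ} (x : Σ uq : ℕ × ℕ, (n - r * uq.1 * uq.2).Partition) :
    n.Partition :=
  if h : r * x.1.1 * x.1.2 ≤ n ∧ 0 < x.1.1 then
    { parts := x.2.parts + Multiset.replicate (x.1.2 * r) x.1.1
      parts_pos := by
        intro i hi
        rcases Multiset.mem_add.mp hi with h' | h'
        · exact x.2.parts_pos h'
        · rw [Multiset.eq_of_mem_replicate h']; exact h.2
      parts_sum := by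
        rw [Multiset.sum_add, x.2.parts_sum, Multiset.sum_replicate, smul_eq_mul]
        have e : x.1.2 * r * x.1.1 = r * x.1.1 * x.1.2 := by ring
        have := h.1
        omega }
  else junkP n

theorem theU_spec (r : ℕ) {n : ℕ} {p : n.Partition} (hp : IsOneRestricted r p) :
    p.parts.toFinset.filter (fun s => r ≤ p.parts.count s) = {theU r p} := by
  obtain ⟨u, hu⟩ := Finset.card_eq_one.mp hp
  have : theU r p = u := by rw [theU, hu, Finset.sum_singleton, id]
  rw [hu, this]

theorem theU_mem (r : ℕ) {n : ℕ} {p : n.Partition} (hp : IsOneRestricted r p) :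
    theU r p ∈ p.parts ∧ r ≤ p.parts.count (theU r p) := by
  have h := theU_spec r hp
  have : theU r p ∈ p.parts.toFinset.filter (fun s => r ≤ p.parts.count s) := by
    rw [h]; exact Finset.mem_singleton_self _
  rw [Finset.mem_filter, Multiset.mem_toFinset] at this
  exact this


theorem bwdD_parts {r n : ℕ} (x : Σ uq : ℕ × ℕ, (n - r * uq.1 * uq.2).Partition)
    (h : r * x.1.1 * x.1.2 ≤ n ∧ 0 < x.1.1) :
    (bwdD r x).parts = x.2.parts + Multiset.replicate (x.1.2 * r) x.1.1 := by
  rw [bwdD, dif_pos h]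

theorem addRep_filter {r : ℕ} (hr : 2 ≤ r) {A : Multiset ℕ} (hA : ∀ s, A.count s ≤ r - 1)
    {u q : ℕ} (hq : 1 ≤ q) :
    (A + Multiset.replicate (q * r) u).toFinset.filter
      (fun s => r ≤ (A + Multiset.replicate (q * r) u).count s) = {u} := by
  have hqr : r ≤ q * r := Nat.le_mul_of_pos_left r hq
  ext s
  rw [Finset.mem_filter, Multiset.mem_toFinset, Finset.mem_singleton]
  constructor
  · rintro ⟨hmem, hge⟩
    by_contra hne
    rw [Multiset.count_add, Multiset.count_replicate, if_neg (fun h => hne h.symm)] at hge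
    have := hA s
    omega
  · rintro rfl
    have hcnt : (A + Multiset.replicate (q * r) s).count s = A.count s + q * r := by
      rw [Multiset.count_add, Multiset.count_replicate, if_pos rfl]
    refine ⟨?_, by omega⟩
    rw [← Multiset.count_pos, hcnt]
    omega

theorem cardD1 (r n : ℕ) (hr : 2 ≤ r) :
    (Finset.univ.filter (fun p : n.Partition => IsOneRestricted r p)).card
      = ((Pairs n r).sigma (fun uq => Finset.univ.filter
          (fun p : (n - r * uq.1 * uq.2).Partition => IsRestricted r p))).card := by
  apply Finset.card_nbij' (fwdD r) (bwdD r)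
  · -- forward membership
    intro p hp
    rw [Finset.mem_coe, Finset.mem_filter] at hp
    obtain ⟨humem, hcnt⟩ := theU_mem r hp.2
    have hu_pos : 0 < theU r p := p.parts_pos humem
    have hq1 : 1 ≤ theQ r p := (Nat.one_le_div_iff (by omega)).mpr hcnt
    have hsum : theQ r p * r * theU r p ≤ n := by
      have h1 := sum_le_sum_of_le (rep_le_parts r p)
      rw [Multiset.sum_replicate, smul_eq_mul, p.parts_sum] at h1
      exact h1
    have he : r * theU r p * theQ r p = theQ r p * r * theU r p := by ring
    rw [Finset.mem_coe, Finset.mem_sigma]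
    have hfst : (fwdD r p).1 = (theU r p, theQ r p) := rfl
    constructor
    · rw [hfst, Pairs, Finset.mem_filter, Finset.mem_product, Finset.mem_Icc, Finset.mem_Icc]
      have hun : theU r p ≤ n := by
        have := Multiset.le_sum_of_mem humem
        rw [p.parts_sum] at this
        exact this
      have hqu1 : theQ r p ≤ theQ r p * r := Nat.le_mul_of_pos_right _ (by omega)
      have hqu2 : theQ r p * r ≤ theQ r p * r * theU r p :=
        Nat.le_mul_of_pos_right _ hu_pos
      refine ⟨⟨⟨hu_pos, hun⟩, ⟨hq1, by omega⟩⟩, ?_⟩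
      show r * theU r p * theQ r p ≤ n
      omega
    · rw [Finset.mem_filter]
      refine ⟨Finset.mem_univ _, ?_⟩
      intro s
      show ((fwdD r p).2.parts).count s ≤ r - 1
      have hparts : (fwdD r p).2.parts
          = p.parts - Multiset.replicate (theQ r p * r) (theU r p) := rfl
      rw [hparts, Multiset.count_sub, Multiset.count_replicate]
      by_cases hsu : theU r p = s
      · rw [if_pos hsu, ← hsu]
        have h1 : theQ r p * r + p.parts.count (theU r p) % r
            = p.parts.count (theU r p) := by
          rw [theQ, mul_comm]; exact Nat.div_add_mod _ _
        have h2 : p.parts.count (theU r p) % r < r := Nat.mod_lt _ (by omega)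
        omega
      · rw [if_neg hsu]
        by_cases hmem : s ∈ p.parts.toFinset
        · by_contra hgt
          have : s ∈ p.parts.toFinset.filter (fun s => r ≤ p.parts.count s) := by
            rw [Finset.mem_filter]
            exact ⟨hmem, by omega⟩
          rw [theU_spec r hp.2, Finset.mem_singleton] at this
          exact hsu this.symm
        · rw [Multiset.count_eq_zero_of_notMem (fun h => hmem (Multiset.mem_toFinset.mpr h))]
          omega
  · -- backward membership
    intro x hx
    rw [Finset.mem_coe, Finset.mem_sigma] at hx
    obtain ⟨hpair, hres⟩ := hx
    rw [Pairs, Finset.mem_filter, Finset.mem_product, Finset.mem_Icc, Finset.mem_Icc] at hpair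
    have hcond : r * x.1.1 * x.1.2 ≤ n ∧ 0 < x.1.1 := ⟨hpair.2, by omega⟩
    rw [Finset.mem_filter] at hres
    rw [Finset.mem_coe, Finset.mem_filter]
    refine ⟨Finset.mem_univ _, ?_⟩
    rw [IsOneRestricted, bwdD_parts x hcond,
      addRep_filter hr hres.2 (by omega : 1 ≤ x.1.2)]
    exact Finset.card_singleton _
  · -- left inverse
    intro p hp
    rw [Finset.mem_coe, Finset.mem_filter] at hp
    obtain ⟨humem, hcnt⟩ := theU_mem r hp.2
    have hu_pos : 0 < theU r p := p.parts_pos humem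
    have hsum : theQ r p * r * theU r p ≤ n := by
      have h1 := sum_le_sum_of_le (rep_le_parts r p)
      rw [Multiset.sum_replicate, smul_eq_mul, p.parts_sum] at h1
      exact h1
    have hcond : r * (fwdD r p).1.1 * (fwdD r p).1.2 ≤ n ∧ 0 < (fwdD r p).1.1 := by
      refine ⟨?_, hu_pos⟩
      show r * theU r p * theQ r p ≤ n
      have he : r * theU r p * theQ r p = theQ r p * r * theU r p := by ring
      omega
    apply Nat.Partition.ext
    rw [bwdD_parts _ hcond]
    show (p.parts - Multiset.replicate (theQ r p * r) (theU r p))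
        + Multiset.replicate (theQ r p * r) (theU r p) = p.parts
    exact tsub_add_cancel_of_le (rep_le_parts r p)
  · -- right inverse
    intro x hx
    rw [Finset.mem_coe, Finset.mem_sigma] at hx
    obtain ⟨hpair, hres⟩ := hx
    rw [Pairs, Finset.mem_filter, Finset.mem_product, Finset.mem_Icc, Finset.mem_Icc] at hpair
    have hcond : r * x.1.1 * x.1.2 ≤ n ∧ 0 < x.1.1 := ⟨hpair.2, by omega⟩
    rw [Finset.mem_filter] at hres
    have hparts := bwdD_parts x hcond
    have hfilter : ((bwdD r x).parts.toFinset.filter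
        (fun s => r ≤ (bwdD r x).parts.count s)) = {x.1.1} := by
      rw [hparts]
      exact addRep_filter hr hres.2 (by omega : 1 ≤ x.1.2)
    have hU : theU r (bwdD r x) = x.1.1 := by
      rw [theU, hfilter, Finset.sum_singleton, id]
    have hcntv : (bwdD r x).parts.count x.1.1 = x.2.parts.count x.1.1 + x.1.2 * r := by
      rw [hparts, Multiset.count_add, Multiset.count_replicate, if_pos rfl]
    have hQ : theQ r (bwdD r x) = x.1.2 := by
      rw [theQ, hU, hcntv]
      have h1 : x.2.parts.count x.1.1 ≤ r - 1 := hres.2 x.1.1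
      rw [Nat.add_mul_div_right _ _ (by omega : 0 < r), Nat.div_eq_of_lt (by omega)]
      omega
    apply sigma_ext
    · show (theU r (bwdD r x), theQ r (bwdD r x)) = x.1
      rw [hU, hQ]
    · show (bwdD r x).parts - Multiset.replicate (theQ r (bwdD r x) * r)
          (theU r (bwdD r x)) = x.2.parts
      rw [hU, hQ, hparts, add_tsub_cancel_right]


/-! ### O-side decomposition -/

/-- The unique part size of `p` divisible by `r`. -/
def theS (r : ℕ) {n : ℕ} (p : n.Partition) : ℕ :=
  (p.parts.toFinset.filter (fun s => r ∣ s)).sum id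

/-- The multiplicity of `theS`. -/
def theM (r : ℕ) {n : ℕ} (p : n.Partition) : ℕ := p.parts.count (theS r p)

/-- `theS` divided by `r`. -/
def theT (r : ℕ) {n : ℕ} (p : n.Partition) : ℕ := theS r p / r

theorem repS_le_parts (r : ℕ) {n : ℕ} (p : n.Partition) :
    Multiset.replicate (theM r p) (theS r p) ≤ p.parts := by
  rw [Multiset.le_iff_count]
  intro a
  rw [Multiset.count_replicate]
  split
  · next h => rw [← h]; exact le_refl _
  · omega

/-- Forward map on the regular side. -/
def fwdO (r : ℕ) {n : ℕ} (p : n.Partition) :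
    Σ uq : ℕ × ℕ, (n - r * uq.1 * uq.2).Partition :=
  ⟨(theT r p, theM r p),
   if h : r ∣ theS r p then
     { parts := p.parts - Multiset.replicate (theM r p) (theS r p)
       parts_pos := fun hi => p.parts_pos (Multiset.mem_of_le tsub_le_self hi)
       parts_sum := by
         rw [sub_sum (repS_le_parts r p), Multiset.sum_replicate, p.parts_sum, smul_eq_mul]
         have e : r * theT r p = theS r p := Nat.mul_div_cancel' h
         have e2 : r * (theT r p, theM r p).1 * (theT r p, theM r p).2
             = theM r p * theS r p := by
           show r * theT r p * theM r p = _
           rw [e]; ring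
         omega }
   else junkP _⟩

/-- Backward map on the regular side. -/
def bwdO (r : ℕ) {n : ℕ} (x : Σ uq : ℕ × ℕ, (n - r * uq.1 * uq.2).Partition) :
    n.Partition :=
  if h : r * x.1.1 * x.1.2 ≤ n ∧ 0 < r * x.1.1 then
    { parts := x.2.parts + Multiset.replicate x.1.2 (r * x.1.1)
      parts_pos := by
        intro i hi
        rcases Multiset.mem_add.mp hi with h' | h'
        · exact x.2.parts_pos h'
        · rw [Multiset.eq_of_mem_replicate h']; exact h.2
      parts_sum := by
        rw [Multiset.sum_add, x.2.parts_sum, Multiset.sum_replicate, smul_eq_mul]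
        have e : x.1.2 * (r * x.1.1) = r * x.1.1 * x.1.2 := by ring
        have := h.1
        omega }
  else junkP n

theorem bwdO_parts {r n : ℕ} (x : Σ uq : ℕ × ℕ, (n - r * uq.1 * uq.2).Partition)
    (h : r * x.1.1 * x.1.2 ≤ n ∧ 0 < r * x.1.1) :
    (bwdO r x).parts = x.2.parts + Multiset.replicate x.1.2 (r * x.1.1) := by
  rw [bwdO, dif_pos h]

theorem theS_spec (r : ℕ) {n : ℕ} {p : n.Partition} (hp : IsOneRegular r p) :
    p.parts.toFinset.filter (fun s => r ∣ s) = {theS r p} := by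
  obtain ⟨u, hu⟩ := Finset.card_eq_one.mp hp
  have : theS r p = u := by rw [theS, hu, Finset.sum_singleton, id]
  rw [hu, this]

theorem theS_mem (r : ℕ) {n : ℕ} {p : n.Partition} (hp : IsOneRegular r p) :
    theS r p ∈ p.parts ∧ r ∣ theS r p := by
  have h := theS_spec r hp
  have : theS r p ∈ p.parts.toFinset.filter (fun s => r ∣ s) := by
    rw [h]; exact Finset.mem_singleton_self _
  rw [Finset.mem_filter, Multiset.mem_toFinset] at this
  exact this

theorem addRepO_filter {r : ℕ} (hr : 2 ≤ r) {A : Multiset ℕ} (hA : ∀ s ∈ A, ¬ r ∣ s)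
    {t m : ℕ} (hm : 1 ≤ m) :
    (A + Multiset.replicate m (r * t)).toFinset.filter (fun s => r ∣ s) = {r * t} := by
  ext s
  rw [Finset.mem_filter, Multiset.mem_toFinset, Finset.mem_singleton]
  constructor
  · rintro ⟨hmem, hdvd⟩
    rcases Multiset.mem_add.mp hmem with h | h
    · exact absurd hdvd (hA s h)
    · exact Multiset.eq_of_mem_replicate h
  · rintro rfl
    refine ⟨?_, dvd_mul_right r t⟩
    rw [Multiset.mem_add]
    exact Or.inr (Multiset.mem_replicate.mpr ⟨by omega, rfl⟩)

theorem cardO1 (r n : ℕ) (hr : 2 ≤ r) :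
    (Finset.univ.filter (fun p : n.Partition => IsOneRegular r p)).card
      = ((Pairs n r).sigma (fun uq => Finset.univ.filter
          (fun p : (n - r * uq.1 * uq.2).Partition => IsRegular r p))).card := by
  apply Finset.card_nbij' (fwdO r) (bwdO r)
  · -- forward membership
    intro p hp
    rw [Finset.mem_coe, Finset.mem_filter] at hp
    obtain ⟨hmem, hdvd⟩ := theS_mem r hp.2
    have hs_pos : 0 < theS r p := p.parts_pos hmem
    have hrS : r ≤ theS r p := Nat.le_of_dvd hs_pos hdvd
    have ht1 : 1 ≤ theT r p := (Nat.one_le_div_iff (by omega)).mpr hrS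
    have hm1 : 1 ≤ theM r p := Multiset.count_pos.mpr hmem
    have hsum : theM r p * theS r p ≤ n := by
      have h1 := sum_le_sum_of_le (repS_le_parts r p)
      rw [Multiset.sum_replicate, smul_eq_mul, p.parts_sum] at h1
      exact h1
    have e : r * theT r p = theS r p := Nat.mul_div_cancel' hdvd
    have e2 : r * theT r p * theM r p = theM r p * theS r p := by rw [e]; ring
    have hparts : (fwdO r p).2.parts
        = p.parts - Multiset.replicate (theM r p) (theS r p) := by
      show (dite _ _ _ : Nat.Partition _).parts = _
      simp only [hdvd, ↓reduceDIte]
    rw [Finset.mem_coe, Finset.mem_sigma]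
    have hfst : (fwdO r p).1 = (theT r p, theM r p) := rfl
    constructor
    · rw [hfst, Pairs, Finset.mem_filter, Finset.mem_product, Finset.mem_Icc, Finset.mem_Icc]
      have hSn : theS r p ≤ n := by
        have := Multiset.le_sum_of_mem hmem
        rw [p.parts_sum] at this
        exact this
      have htn : theT r p ≤ n := le_trans (Nat.div_le_self _ _) hSn
      have hmn : theM r p ≤ n := by
        have h1 := Multiset.count_le_card (theS r p) p.parts
        have h2 := card_le_sum' (fun x hx => p.parts_pos hx)
        rw [p.parts_sum] at h2
        rw [theM]
        omega
      refine ⟨⟨⟨ht1, htn⟩, ⟨hm1, hmn⟩⟩, ?_⟩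
      show r * theT r p * theM r p ≤ n
      omega
    · rw [Finset.mem_filter]
      refine ⟨Finset.mem_univ _, ?_⟩
      intro x hx
      rw [hparts] at hx
      have hxp : x ∈ p.parts := Multiset.mem_of_le tsub_le_self hx
      intro hdx
      have hxS : x = theS r p := by
        have : x ∈ p.parts.toFinset.filter (fun s => r ∣ s) := by
          rw [Finset.mem_filter, Multiset.mem_toFinset]
          exact ⟨hxp, hdx⟩
        rw [theS_spec r hp.2, Finset.mem_singleton] at this
        exact this
      subst hxS
      have : (p.parts - Multiset.replicate (theM r p) (theS r p)).count (theS r p) = 0 := by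
        rw [Multiset.count_sub, Multiset.count_replicate, if_pos rfl, theM]
        omega
      have := Multiset.count_pos.mpr hx
      omega
  · -- backward membership
    intro x hx
    rw [Finset.mem_coe, Finset.mem_sigma] at hx
    obtain ⟨hpair, hreg⟩ := hx
    rw [Pairs, Finset.mem_filter, Finset.mem_product, Finset.mem_Icc, Finset.mem_Icc] at hpair
    have hcond : r * x.1.1 * x.1.2 ≤ n ∧ 0 < r * x.1.1 := by
      refine ⟨hpair.2, ?_⟩
      have := hpair.1.1.1
      positivity
    rw [Finset.mem_filter] at hreg
    rw [Finset.mem_coe, Finset.mem_filter]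
    refine ⟨Finset.mem_univ _, ?_⟩
    rw [IsOneRegular, bwdO_parts x hcond,
      addRepO_filter hr hreg.2 hpair.1.2.1]
    exact Finset.card_singleton _
  · -- left inverse
    intro p hp
    rw [Finset.mem_coe, Finset.mem_filter] at hp
    obtain ⟨hmem, hdvd⟩ := theS_mem r hp.2
    have hs_pos : 0 < theS r p := p.parts_pos hmem
    have hrS : r ≤ theS r p := Nat.le_of_dvd hs_pos hdvd
    have ht1 : 1 ≤ theT r p := (Nat.one_le_div_iff (by omega)).mpr hrS
    have hsum : theM r p * theS r p ≤ n := by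
      have h1 := sum_le_sum_of_le (repS_le_parts r p)
      rw [Multiset.sum_replicate, smul_eq_mul, p.parts_sum] at h1
      exact h1
    have e : r * theT r p = theS r p := Nat.mul_div_cancel' hdvd
    have hparts : (fwdO r p).2.parts
        = p.parts - Multiset.replicate (theM r p) (theS r p) := by
      show (dite _ _ _ : Nat.Partition _).parts = _
      simp only [hdvd, ↓reduceDIte]
    have hcond : r * (fwdO r p).1.1 * (fwdO r p).1.2 ≤ n ∧ 0 < r * (fwdO r p).1.1 := by
      constructor
      · show r * theT r p * theM r p ≤ n
        have e2 : r * theT r p * theM r p = theM r p * theS r p := by rw [e]; ring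
        omega
      · show 0 < r * theT r p
        positivity
    apply Nat.Partition.ext
    rw [bwdO_parts _ hcond]
    show (fwdO r p).2.parts + Multiset.replicate (theM r p) (r * theT r p) = p.parts
    rw [hparts, e]
    exact tsub_add_cancel_of_le (repS_le_parts r p)
  · -- right inverse
    intro x hx
    rw [Finset.mem_coe, Finset.mem_sigma] at hx
    obtain ⟨hpair, hreg⟩ := hx
    rw [Pairs, Finset.mem_filter, Finset.mem_product, Finset.mem_Icc, Finset.mem_Icc] at hpair
    have hcond : r * x.1.1 * x.1.2 ≤ n ∧ 0 < r * x.1.1 := by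
      refine ⟨hpair.2, ?_⟩
      have := hpair.1.1.1
      positivity
    rw [Finset.mem_filter] at hreg
    have hparts := bwdO_parts x hcond
    have hfilter : (bwdO r x).parts.toFinset.filter (fun s => r ∣ s) = {r * x.1.1} := by
      rw [hparts]
      exact addRepO_filter hr hreg.2 hpair.1.2.1
    have hS : theS r (bwdO r x) = r * x.1.1 := by
      rw [theS, hfilter, Finset.sum_singleton, id]
    have hM : theM r (bwdO r x) = x.1.2 := by
      rw [theM, hS, hparts, Multiset.count_add, Multiset.count_replicate, if_pos rfl,
        Multiset.count_eq_zero_of_notMem (fun h => hreg.2 _ h (dvd_mul_right r _))]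
      omega
    have hT : theT r (bwdO r x) = x.1.1 := by
      rw [theT, hS, Nat.mul_div_cancel_left _ (by omega : 0 < r)]
    have hdvd' : r ∣ theS r (bwdO r x) := by rw [hS]; exact dvd_mul_right r _
    have hparts2 : (fwdO r (bwdO r x)).2.parts
        = (bwdO r x).parts - Multiset.replicate (theM r (bwdO r x)) (theS r (bwdO r x)) := by
      show (dite _ _ _ : Nat.Partition _).parts = _
      simp only [hdvd', ↓reduceDIte]
    apply sigma_ext
    · show (theT r (bwdO r x), theM r (bwdO r x)) = x.1
      rw [hT, hM]
    · rw [hparts2, hS, hM, hparts, add_tsub_cancel_right]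

theorem oneRestricted_eq_oneRegular (n r : ℕ) (hr : 2 ≤ r) :
    (Finset.univ.filter (fun p : n.Partition => IsOneRestricted r p)).card = (Finset.univ.filter (fun p : n.Partition => IsOneRegular r p)).card := by
  rw [cardD1 r n hr, cardO1 r n hr, Finset.card_sigma, Finset.card_sigma]
  exact Finset.sum_congr rfl (fun uq _ => glaisher r hr _)

end BeckPaper
end
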